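/- Let A be a real m×d matrix, let P : ℝ^m → ℝ^m be the orthogonal projection onto the column space (range) of A, and let c > 0 satisfy ‖Aᵀv‖ ≥ c‖Pv‖ for all v ∈ ℝ^m. Let h : ℝ^m → ℝ be differentiable and μ-strongly convex with μ > 0. Then the function f(z) := h(Az) on ℝ^d is bounded below, and for every z ∈ ℝ^d it satisfies the Polyak–Łojasiewicz inequality ‖Aᵀ∇h(Az)‖² ≥ 2μc²·( f(z) − inf_{z'} f(z') ), where Aᵀ∇h(Az) is the gradient of f at z. -/

import Mathlib

open Matrix

section aux

variable {m d : ℕ} (A : Matrix (Fin m) (Fin d) ℝ)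

lemma aux_adjoint_apply (v : EuclideanSpace ℝ (Fin m)) (u : EuclideanSpace ℝ (Fin d)) :
    (inner ℝ (Matrix.toEuclideanLin Aᵀ v) u : ℝ) = inner ℝ v (Matrix.toEuclideanLin A u) := by
  have : Aᵀ = Aᴴ := (Matrix.conjTranspose_eq_transpose_of_trivial A).symm
  rw [this, Matrix.toEuclideanLin_conjTranspose_eq_adjoint, LinearMap.adjoint_inner_left]

lemma aux_grad {h : EuclideanSpace ℝ (Fin m) → ℝ}
    {h' : EuclideanSpace ℝ (Fin m) → EuclideanSpace ℝ (Fin m)}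
    (hgrad : ∀ x, HasGradientAt h (h' x) x) (z : EuclideanSpace ℝ (Fin d)) :
    HasGradientAt (fun z' => h (Matrix.toEuclideanLin A z'))
      (Matrix.toEuclideanLin Aᵀ (h' (Matrix.toEuclideanLin A z))) z := by
  set T : EuclideanSpace ℝ (Fin d) →L[ℝ] EuclideanSpace ℝ (Fin m) :=
    LinearMap.toContinuousLinearMap (Matrix.toEuclideanLin A) with hT
  have hTapp : ∀ u, T u = Matrix.toEuclideanLin A u := fun u => rfl
  rw [hasGradientAt_iff_hasFDerivAt]
  have h1 : HasFDerivAt h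
      (InnerProductSpace.toDual ℝ _ (h' (Matrix.toEuclideanLin A z)))
      (T z) := by
    rw [hTapp]
    exact (hgrad _).hasFDerivAt
  have h2 : HasFDerivAt (fun z' => h (T z'))
      (((InnerProductSpace.toDual ℝ _ (h' (Matrix.toEuclideanLin A z))) : _ →L[ℝ] ℝ).comp T)
      z := h1.comp z (T.hasFDerivAt)
  have heq : ((InnerProductSpace.toDual ℝ _ (h' (Matrix.toEuclideanLin A z))) : _ →L[ℝ] ℝ).comp T
      = InnerProductSpace.toDual ℝ _ (Matrix.toEuclideanLin Aᵀ (h' (Matrix.toEuclideanLin A z))) := by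
    ext u
    simp only [ContinuousLinearMap.coe_comp', Function.comp_apply,
      InnerProductSpace.toDual_apply_apply, hTapp]
    exact (aux_adjoint_apply A _ u).symm
  rw [heq] at h2
  exact h2

lemma aux_lower {μ : ℝ} (hμ : 0 < μ)
    {h : EuclideanSpace ℝ (Fin m) → ℝ}
    {h' : EuclideanSpace ℝ (Fin m) → EuclideanSpace ℝ (Fin m)}
    (hsc : ∀ x y : EuclideanSpace ℝ (Fin m),
      h x + inner ℝ (h' x) (y - x) + μ / 2 * ‖y - x‖ ^ 2 ≤ h y)
    (z z' : EuclideanSpace ℝ (Fin d)) :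
    h (Matrix.toEuclideanLin A z) -
      ‖(Submodule.orthogonalProjectionOnto (LinearMap.range (Matrix.toEuclideanLin A))
          (h' (Matrix.toEuclideanLin A z)) : EuclideanSpace ℝ (Fin m))‖ ^ 2 / (2 * μ)
      ≤ h (Matrix.toEuclideanLin A z') := by
  set K := LinearMap.range (Matrix.toEuclideanLin A)
  set x := Matrix.toEuclideanLin A z
  set g := h' x
  set Pg : EuclideanSpace ℝ (Fin m) := (Submodule.orthogonalProjectionOnto K g : EuclideanSpace ℝ (Fin m))
  set u : EuclideanSpace ℝ (Fin m) := Matrix.toEuclideanLin A z' - x with hu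
  have huK : u ∈ K := by
    have : u = Matrix.toEuclideanLin A (z' - z) := by rw [hu, map_sub]
    rw [this]; exact LinearMap.mem_range_self _ _
  have hinner : (inner ℝ g u : ℝ) = inner ℝ Pg u := by
    have h0 : (inner ℝ u (g - Pg) : ℝ) = 0 :=
      Submodule.sub_starProjection_mem_orthogonal (K := K) g u huK
    rw [inner_sub_right] at h0
    rw [real_inner_comm u g, real_inner_comm u Pg]
    linarith
  have hsc' := hsc x (Matrix.toEuclideanLin A z')
  have habs : |(inner ℝ Pg u : ℝ)| ≤ ‖Pg‖ * ‖u‖ := abs_real_inner_le_norm _ _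
  have h1 : -(‖Pg‖ * ‖u‖) ≤ (inner ℝ Pg u : ℝ) := neg_le_of_abs_le habs
  have hnPg : 0 ≤ ‖Pg‖ := norm_nonneg _
  have hnu : 0 ≤ ‖u‖ := norm_nonneg _
  have key : -(‖Pg‖ ^ 2 / (2 * μ)) ≤ (inner ℝ Pg u : ℝ) + μ / 2 * ‖u‖ ^ 2 := by
    have h2 : ‖Pg‖ ^ 2 / (2 * μ) + μ / 2 * ‖u‖ ^ 2 - ‖Pg‖ * ‖u‖
        = (‖Pg‖ - μ * ‖u‖) ^ 2 / (2 * μ) := by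
      field_simp
      ring
    have h3 : (0:ℝ) ≤ (‖Pg‖ - μ * ‖u‖) ^ 2 / (2 * μ) := by positivity
    linarith
  have : (inner ℝ g u : ℝ) + μ / 2 * ‖u‖ ^ 2 ≥ -(‖Pg‖ ^ 2 / (2 * μ)) := by
    rw [hinner]; exact key
  have hx : Matrix.toEuclideanLin A z' - x = u := rfl
  rw [hx] at hsc'
  linarith

end aux

/-- **Observation 2, part 1.**
A `μ`-strongly convex differentiable function `h` composed with a linear map `A`
(with `c > 0` a lower bound of the type `‖Aᵀ v‖ ≥ c ‖P v‖`, where `P` is the orthogonal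
projection onto the column space of `A`, i.e. `c` plays the role of the smallest nonzero
singular value of `A`) yields a function `f z = h (A z)` that is bounded below and satisfies
the Polyak–Łojasiewicz inequality with constant `μ c²`; moreover `Aᵀ ∇h(Az)` is the gradient
of `f` at `z`. -/
theorem stmt_0 {m d : ℕ} (A : Matrix (Fin m) (Fin d) ℝ) (c μ : ℝ)
    (hc : 0 < c) (hμ : 0 < μ)
    (hA : ∀ v : EuclideanSpace ℝ (Fin m),
      c * ‖(Submodule.orthogonalProjectionOnto (LinearMap.range (Matrix.toEuclideanLin A)) v :
        EuclideanSpace ℝ (Fin m))‖ ≤ ‖Matrix.toEuclideanLin Aᵀ v‖)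
    (h : EuclideanSpace ℝ (Fin m) → ℝ)
    (h' : EuclideanSpace ℝ (Fin m) → EuclideanSpace ℝ (Fin m))
    (hgrad : ∀ x, HasGradientAt h (h' x) x)
    (hsc : ∀ x y : EuclideanSpace ℝ (Fin m),
      h x + inner ℝ (h' x) (y - x) + μ / 2 * ‖y - x‖ ^ 2 ≤ h y) :
    BddBelow (Set.range fun z : EuclideanSpace ℝ (Fin d) => h (Matrix.toEuclideanLin A z)) ∧
    ∀ z : EuclideanSpace ℝ (Fin d),
      HasGradientAt (fun z' => h (Matrix.toEuclideanLin A z'))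
        (Matrix.toEuclideanLin Aᵀ (h' (Matrix.toEuclideanLin A z))) z ∧
      2 * μ * c ^ 2 *
          (h (Matrix.toEuclideanLin A z) -
            ⨅ z' : EuclideanSpace ℝ (Fin d), h (Matrix.toEuclideanLin A z')) ≤
        ‖Matrix.toEuclideanLin Aᵀ (h' (Matrix.toEuclideanLin A z))‖ ^ 2 := by
  have hbdd : BddBelow (Set.range fun z : EuclideanSpace ℝ (Fin d) =>
      h (Matrix.toEuclideanLin A z)) := by
    refine ⟨h (Matrix.toEuclideanLin A 0) -
      ‖(Submodule.orthogonalProjectionOnto (LinearMap.range (Matrix.toEuclideanLin A))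
          (h' (Matrix.toEuclideanLin A 0)) : EuclideanSpace ℝ (Fin m))‖ ^ 2 / (2 * μ), ?_⟩
    rintro y ⟨z', rfl⟩
    exact aux_lower A hμ hsc 0 z'
  refine ⟨hbdd, fun z => ⟨aux_grad A hgrad z, ?_⟩⟩
  set Pg : EuclideanSpace ℝ (Fin m) :=
    (Submodule.orthogonalProjectionOnto (LinearMap.range (Matrix.toEuclideanLin A))
      (h' (Matrix.toEuclideanLin A z)) : EuclideanSpace ℝ (Fin m))
  have hinf : h (Matrix.toEuclideanLin A z) - ‖Pg‖ ^ 2 / (2 * μ) ≤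
      ⨅ z' : EuclideanSpace ℝ (Fin d), h (Matrix.toEuclideanLin A z') :=
    le_ciInf fun z' => aux_lower A hμ hsc z z'
  have hA' := hA (h' (Matrix.toEuclideanLin A z))
  have hn : 0 ≤ ‖Pg‖ := norm_nonneg _
  have hinf' : h (Matrix.toEuclideanLin A z) -
      (⨅ z' : EuclideanSpace ℝ (Fin d), h (Matrix.toEuclideanLin A z'))
      ≤ ‖Pg‖ ^ 2 / (2 * μ) := by linarith
  have hstep := mul_le_mul_of_nonneg_left hinf' (by positivity : (0:ℝ) ≤ 2 * μ * c ^ 2)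
  have hval : 2 * μ * c ^ 2 * (‖Pg‖ ^ 2 / (2 * μ)) = c ^ 2 * ‖Pg‖ ^ 2 := by
    field_simp
  have hsq : c ^ 2 * ‖Pg‖ ^ 2 ≤
      ‖Matrix.toEuclideanLin Aᵀ (h' (Matrix.toEuclideanLin A z))‖ ^ 2 := by
    nlinarith [mul_le_mul hA' hA' (by positivity : (0:ℝ) ≤ c * ‖Pg‖) (norm_nonneg _)]
  linarith [hstep, hval ▸ hstep]
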